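/- Let f : C → C' be a homomorphism of abelian groups with finite kernel and finite cokernel, and define z(f) = |ker f| / |coker f|. If 0 → C₁ → C₂ → C₃ → 0 and 0 → C₁' → C₂' → C₃' → 0 are short exact sequences and f₁, f₂, f₃ form a morphism of these sequences, each with finite kernel and cokernel, then z(f₂) = z(f₁)·z(f₃). -/
import Mathlib

/-- `z(f) = |ker f| / |coker f|` for a homomorphism of abelian groups with
finite kernel and cokernel. -/
noncomputable def zmap {A B : Type*} [AddCommGroup A] [AddCommGroup B] (f : A →+ B) : ℚ :=
  (Nat.card f.ker : ℚ) / (Nat.card (B ⧸ f.range) : ℚ)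

lemma card_dom_eq_aux {A B : Type*} [AddCommGroup A] [AddCommGroup B] [Finite A] (g : A →+ B) :
    Nat.card A = Nat.card g.ker * Nat.card g.range := by
  rw [AddSubgroup.card_eq_card_quotient_mul_card_addSubgroup g.ker,
    Nat.card_congr (QuotientAddGroup.quotientKerEquivRange g).toEquiv, mul_comm]

/-- For a morphism `(f₁, f₂, f₃)` of short exact sequences of abelian groups,
each component having finite kernel and cokernel, `z(f₂) = z(f₁)·z(f₃)`. -/
theorem zmap_multiplicative
    {C₁ C₂ C₃ C₁' C₂' C₃' : Type*}
    [AddCommGroup C₁] [AddCommGroup C₂] [AddCommGroup C₃]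
    [AddCommGroup C₁'] [AddCommGroup C₂'] [AddCommGroup C₃']
    (i : C₁ →+ C₂) (p : C₂ →+ C₃) (i' : C₁' →+ C₂') (p' : C₂' →+ C₃')
    (hi : Function.Injective i) (hp : Function.Surjective p) (hip : i.range = p.ker)
    (hi' : Function.Injective i') (hp' : Function.Surjective p') (hip' : i'.range = p'.ker)
    (f₁ : C₁ →+ C₁') (f₂ : C₂ →+ C₂') (f₃ : C₃ →+ C₃')
    (hcomm₁ : ∀ x : C₁, f₂ (i x) = i' (f₁ x))
    (hcomm₂ : ∀ x : C₂, f₃ (p x) = p' (f₂ x))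
    (h₁k : Finite f₁.ker) (h₁c : Finite (C₁' ⧸ f₁.range))
    (h₂k : Finite f₂.ker) (h₂c : Finite (C₂' ⧸ f₂.range))
    (h₃k : Finite f₃.ker) (h₃c : Finite (C₃' ⧸ f₃.range)) :
    zmap f₂ = zmap f₁ * zmap f₃ := by
  haveI := h₁k; haveI := h₁c; haveI := h₂k; haveI := h₂c; haveI := h₃k; haveI := h₃c
  set Q₁ := C₁' ⧸ f₁.range
  set Q₂ := C₂' ⧸ f₂.range
  set Q₃ := C₃' ⧸ f₃.range
  let mk₁ : C₁' →+ Q₁ := QuotientAddGroup.mk' f₁.range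
  let mk₂ : C₂' →+ Q₂ := QuotientAddGroup.mk' f₂.range
  let mk₃ : C₃' →+ Q₃ := QuotientAddGroup.mk' f₃.range
  -- the maps between kernels
  have hk12 : ∀ x : f₁.ker, f₂ (i x) = 0 := by
    intro x
    rw [hcomm₁, (f₁.mem_ker).mp x.2, map_zero]
  let k₁₂ : f₁.ker →+ f₂.ker :=
    { toFun := fun x => ⟨i x, hk12 x⟩
      map_zero' := by ext; simp
      map_add' := by intro a b; ext; simp }
  have hk23 : ∀ x : f₂.ker, f₃ (p x) = 0 := by
    intro x
    rw [hcomm₂, (f₂.mem_ker).mp x.2, map_zero]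
  let k₂₃ : f₂.ker →+ f₃.ker :=
    { toFun := fun x => ⟨p x, hk23 x⟩
      map_zero' := by ext; simp
      map_add' := by intro a b; ext; simp }
  -- the maps between cokernels
  have hc12 : f₁.range ≤ f₂.range.comap i' := by
    rintro _ ⟨c, rfl⟩
    exact ⟨i c, hcomm₁ c⟩
  let c₁₂ : Q₁ →+ Q₂ := QuotientAddGroup.map _ _ i' hc12
  have hc23 : f₂.range ≤ f₃.range.comap p' := by
    rintro _ ⟨c, rfl⟩
    exact ⟨p c, hcomm₂ c⟩
  let c₂₃ : Q₂ →+ Q₃ := QuotientAddGroup.map _ _ p' hc23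
  have c₁₂_mk : ∀ a : C₁', c₁₂ (mk₁ a) = mk₂ (i' a) := fun a => rfl
  have c₂₃_mk : ∀ b : C₂', c₂₃ (mk₂ b) = mk₃ (p' b) := fun b => rfl
  -- the connecting map
  have key : ∀ (y y' : C₂) (a a' : C₁'), p y = p y' → i' a = f₂ y → i' a' = f₂ y' →
      mk₁ a = mk₁ a' := by
    intro y y' a a' hpy ha ha'
    have : y - y' ∈ p.ker := by rw [AddMonoidHom.mem_ker, map_sub, hpy, sub_self]
    rw [← hip] at this
    obtain ⟨c, hc⟩ := this
    have : i' (a - a') = i' (f₁ c) := by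
      rw [map_sub, ha, ha', ← hcomm₁, hc, map_sub]
    have hsub : a - a' = f₁ c := hi' this
    show QuotientAddGroup.mk' f₁.range a = QuotientAddGroup.mk' f₁.range a'
    rw [QuotientAddGroup.mk'_eq_mk']
    exact ⟨f₁ (-c), ⟨-c, rfl⟩, by rw [map_neg, ← hsub]; abel⟩
  have exists_da : ∀ x : f₃.ker, ∃ (a : C₁') (y : C₂), p y = (x : C₃) ∧ i' a = f₂ y := by
    intro x
    obtain ⟨y, hy⟩ := hp (x : C₃)
    have : f₂ y ∈ p'.ker := by
      rw [AddMonoidHom.mem_ker, ← hcomm₂, hy, (f₃.mem_ker).mp x.2]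
    rw [← hip'] at this
    obtain ⟨a, ha⟩ := this
    exact ⟨a, y, hy, ha⟩
  let δf : f₃.ker → Q₁ := fun x => mk₁ (exists_da x).choose
  have δ_spec : ∀ (x : f₃.ker) (y : C₂) (a : C₁'), p y = (x : C₃) → i' a = f₂ y →
      δf x = mk₁ a := by
    intro x y a h1 h2
    obtain ⟨y₀, h₀1, h₀2⟩ := (exists_da x).choose_spec
    exact key y₀ y _ a (by rw [h₀1, h1]) h₀2 h2
  have δ_add : ∀ x x' : f₃.ker, δf (x + x') = δf x + δf x' := by
    intro x x'
    obtain ⟨y, hy1, hy2⟩ := (exists_da x).choose_spec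
    obtain ⟨y', hy'1, hy'2⟩ := (exists_da x').choose_spec
    have : δf (x + x') = mk₁ ((exists_da x).choose + (exists_da x').choose) := by
      refine δ_spec _ (y + y') _ ?_ ?_
      · rw [map_add, hy1, hy'1]; rfl
      · rw [map_add, map_add, hy2, hy'2]
    rw [this, map_add]
  let δ : f₃.ker →+ Q₁ := AddMonoidHom.mk' δf δ_add
  -- exactness
  have E0 : Function.Injective k₁₂ := by
    intro a b hab
    ext
    exact hi (congrArg Subtype.val hab)
  have E1 : k₂₃.ker = k₁₂.range := by
    ext ⟨y, hy⟩
    simp only [AddMonoidHom.mem_ker, AddMonoidHom.mem_range]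
    constructor
    · intro h
      have hy0 : p y = 0 := congrArg Subtype.val h
      have : y ∈ i.range := hip ▸ (p.mem_ker).mpr hy0
      obtain ⟨c, hc⟩ := this
      have hc0 : f₁ c = 0 := hi' (by rw [← hcomm₁, hc, hy, map_zero])
      exact ⟨⟨c, hc0⟩, by ext; exact hc⟩
    · rintro ⟨⟨c, hc⟩, he⟩
      have hy' : i c = y := congrArg Subtype.val he
      ext
      show p y = 0
      rw [← hy', ← AddMonoidHom.mem_ker, ← hip]
      exact ⟨c, rfl⟩
  have E2 : δ.ker = k₂₃.range := by
    ext x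
    simp only [AddMonoidHom.mem_ker, AddMonoidHom.mem_range]
    constructor
    · intro h
      obtain ⟨y, hy1, hy2⟩ := (exists_da x).choose_spec
      set a := (exists_da x).choose with ha
      have : mk₁ a = 0 := h
      have hmem : a ∈ f₁.range := (QuotientAddGroup.eq_zero_iff a).mp this
      obtain ⟨c, hc⟩ := hmem
      refine ⟨⟨y - i c, ?_⟩, ?_⟩
      · rw [AddMonoidHom.mem_ker, map_sub, hcomm₁, hc, hy2, sub_self]
      · ext
        show p (y - i c) = x
        have : p (i c) = 0 := by rw [← AddMonoidHom.mem_ker, ← hip]; exact ⟨c, rfl⟩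
        rw [map_sub, this, sub_zero, hy1]
    · rintro ⟨⟨y, hy⟩, rfl⟩
      show δf _ = 0
      rw [δ_spec _ y 0 rfl (by rw [map_zero, hy])]
      simp
  have E3 : c₁₂.ker = δ.range := by
    ext q
    obtain ⟨a, rfl⟩ := QuotientAddGroup.mk'_surjective f₁.range q
    simp only [AddMonoidHom.mem_ker, AddMonoidHom.mem_range]
    constructor
    · intro h
      have : i' a ∈ f₂.range := by
        rwa [← QuotientAddGroup.eq_zero_iff (i' a)]
      obtain ⟨y, hy⟩ := this
      have hx : f₃ (p y) = 0 := by rw [hcomm₂, hy, ← AddMonoidHom.mem_ker, ← hip']; exact ⟨a, rfl⟩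
      exact ⟨⟨p y, hx⟩, (δ_spec _ y a rfl hy.symm)⟩
    · rintro ⟨x, hx⟩
      rw [← hx]
      obtain ⟨y, hy1, hy2⟩ := (exists_da x).choose_spec
      show c₁₂ (mk₁ _) = 0
      rw [c₁₂_mk, hy2]
      exact (QuotientAddGroup.eq_zero_iff _).mpr ⟨y, rfl⟩
  have E4 : c₂₃.ker = c₁₂.range := by
    ext q
    obtain ⟨b, rfl⟩ := QuotientAddGroup.mk'_surjective f₂.range q
    simp only [AddMonoidHom.mem_ker, AddMonoidHom.mem_range]
    constructor
    · intro h
      have : p' b ∈ f₃.range := by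
        rwa [← QuotientAddGroup.eq_zero_iff (p' b)]
      obtain ⟨t, ht⟩ := this
      obtain ⟨s, hs⟩ := hp t
      have : b - f₂ s ∈ p'.ker := by
        rw [AddMonoidHom.mem_ker, map_sub, ← hcomm₂, hs, ht, sub_self]
      rw [← hip'] at this
      obtain ⟨a, ha⟩ := this
      refine ⟨mk₁ a, ?_⟩
      rw [c₁₂_mk, ha]
      have : mk₂ (f₂ s) = 0 := (QuotientAddGroup.eq_zero_iff _).mpr ⟨s, rfl⟩
      rw [map_sub, this, sub_zero]
    · rintro ⟨q', hq⟩
      rw [← hq]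
      obtain ⟨a, rfl⟩ := QuotientAddGroup.mk'_surjective f₁.range q'
      show c₂₃ (c₁₂ (mk₁ a)) = 0
      rw [c₁₂_mk, c₂₃_mk]
      have : p' (i' a) = 0 := by rw [← AddMonoidHom.mem_ker, ← hip']; exact ⟨a, rfl⟩
      rw [this, map_zero]
  have E5 : Function.Surjective c₂₃ := by
    intro q
    obtain ⟨t, rfl⟩ := QuotientAddGroup.mk'_surjective f₃.range q
    obtain ⟨b, rfl⟩ := hp' t
    exact ⟨mk₂ b, rfl⟩
  -- finiteness
  haveI : Finite Q₁ := h₁c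
  -- counting
  have hcK1 := card_dom_eq_aux k₁₂
  have hcK2 := card_dom_eq_aux k₂₃
  have hcK3 := card_dom_eq_aux δ
  have hcQ1 := card_dom_eq_aux c₁₂
  have hcQ2 := card_dom_eq_aux c₂₃
  rw [(AddMonoidHom.ker_eq_bot_iff k₁₂).mpr E0, AddSubgroup.card_bot, one_mul] at hcK1
  rw [E1] at hcK2
  rw [E2] at hcK3
  rw [E3] at hcQ1
  rw [E4] at hcQ2
  rw [AddMonoidHom.range_eq_top.mpr E5, AddSubgroup.card_top] at hcQ2
  -- positivity
  have p2k : (0:ℚ) < Nat.card f₂.ker := by exact_mod_cast Nat.card_pos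
  have p2c : (0:ℚ) < Nat.card Q₂ := by exact_mod_cast Nat.card_pos
  have p1k : (0:ℚ) < Nat.card f₁.ker := by exact_mod_cast Nat.card_pos
  have p1c : (0:ℚ) < Nat.card Q₁ := by exact_mod_cast Nat.card_pos
  have p3k : (0:ℚ) < Nat.card f₃.ker := by exact_mod_cast Nat.card_pos
  have p3c : (0:ℚ) < Nat.card Q₃ := by exact_mod_cast Nat.card_pos
  have main : Nat.card f₂.ker * Nat.card Q₁ * Nat.card Q₃
      = Nat.card f₁.ker * Nat.card f₃.ker * Nat.card Q₂ := by
    rw [hcK1, hcK2, hcK3, hcQ1, hcQ2]; ring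
  unfold zmap
  rw [div_mul_div_comm, div_eq_div_iff (by positivity) (by positivity)]
  have : ((Nat.card f₂.ker * Nat.card Q₁ * Nat.card Q₃ : ℕ) : ℚ)
      = ((Nat.card f₁.ker * Nat.card f₃.ker * Nat.card Q₂ : ℕ) : ℚ) := by
    exact_mod_cast congrArg (Nat.cast : ℕ → ℚ) main
  push_cast at this
  linarith [this]
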